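/- Let f : Y → Z be a cubical map between CAT(0) cube complexes. Then the inverse image under f of any hyperplane of Z is a disjoint union of hyperplanes of Y. -/

import Mathlib

/-! A combinatorial model of CAT(0) cube complexes: by a theorem of Chepoi, the
1-skeleta of CAT(0) cube complexes are exactly the median graphs, and the cube
complex is determined by its 1-skeleton (cubes = induced subhypercubes, by
flagness).  We phrase statements about CAT(0) cube complexes in this model. -/

open SimpleGraph

/-- A subset of vertices is convex (equivalently, the subcomplex it spans is a
convex subcomplex) iff it is closed under metric betweenness. -/
def ConvexIn {V : Type} (G : SimpleGraph V) (S : Set V) : Prop :=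
  ∀ x ∈ S, ∀ y ∈ S, ∀ z : V, G.dist x z + G.dist z y = G.dist x y → z ∈ S

/-- Median graphs: connected graphs in which every triple of vertices has a
unique median. -/
def IsMedianGraph {V : Type} (G : SimpleGraph V) : Prop :=
  G.Connected ∧ ∀ x y z : V, ∃! m : V,
    G.dist x m + G.dist m y = G.dist x y ∧
    G.dist y m + G.dist m z = G.dist y z ∧
    G.dist x m + G.dist m z = G.dist x z

/-- `x y z w` are the vertices (in cyclic order) of a square (2-cube). -/
def IsSquare4 {V : Type} (G : SimpleGraph V) (x y z w : V) : Prop :=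
  G.Adj x y ∧ G.Adj y z ∧ G.Adj z w ∧ G.Adj w x ∧ x ≠ z ∧ y ≠ w

/-- Oriented edges `e`, `f` are opposite sides of a square. -/
def ElemPar {V : Type} (G : SimpleGraph V) (e f : V × V) : Prop :=
  G.Adj e.1 e.2 ∧ G.Adj f.1 f.2 ∧ G.Adj e.1 f.1 ∧ G.Adj e.2 f.2 ∧ e.1 ≠ f.2 ∧ e.2 ≠ f.1

/-- Parallelism of (oriented) edges: the equivalence relation generated by being
opposite sides of a square, together with orientation reversal. -/
def Par {V : Type} (G : SimpleGraph V) : V × V → V × V → Prop :=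
  Relation.EqvGen (fun e f => ElemPar G e f ∨ f = (e.2, e.1))

/-- A hyperplane, recorded as the set of (oriented) edges dual to it, i.e. a
parallelism class of edges. -/
def IsHyperplane {V : Type} (G : SimpleGraph V) (h : Set (V × V)) : Prop :=
  ∃ e : V × V, G.Adj e.1 e.2 ∧ h = {f | G.Adj f.1 f.2 ∧ Par G e f}

/-- Two hyperplanes cross (intersect as subspaces) iff they have dual edges
forming the corner of a square. -/
def CrossHyp {V : Type} (G : SimpleGraph V) (h₁ h₂ : Set (V × V)) : Prop :=
  ∃ x y z w : V, IsSquare4 G x y z w ∧ (x, y) ∈ h₁ ∧ (y, z) ∈ h₂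

/-- A cubical map, at the level of 1-skeleta: each edge is mapped to an edge or
collapsed to a vertex, and the restriction to each square is a natural projection
onto a face followed by an isometry (so a square maps to a square, an edge
(collapsing one parallel class of its sides), or a vertex). -/
def IsCubicalMap {V V' : Type} (G : SimpleGraph V) (H : SimpleGraph V') (f : V → V') : Prop :=
  (∀ x y : V, G.Adj x y → f x = f y ∨ H.Adj (f x) (f y)) ∧
  (∀ x y z w : V, IsSquare4 G x y z w →
    (f x = f y ∧ f y = f z ∧ f z = f w) ∨
    (f x = f y ∧ f z = f w ∧ f x ≠ f z) ∨
    (f y = f z ∧ f w = f x ∧ f x ≠ f y) ∨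
    (f x ≠ f z ∧ f y ≠ f w ∧ f x ≠ f y ∧ f y ≠ f z ∧ f z ≠ f w ∧ f w ≠ f x))

/-- The set of edges of the source mapping into a given set `h` of edges of the
target (the combinatorial inverse image of a hyperplane). -/
def hypPreimage {V V' : Type} (G : SimpleGraph V) (f : V → V') (h : Set (V' × V')) :
    Set (V × V) :=
  {e | G.Adj e.1 e.2 ∧ (f e.1, f e.2) ∈ h}

/-- `c` is (the vertex set of) a cube of dimension `n`: an induced subhypercube of
the 1-skeleton (these span actual cubes of the complex, by flagness). -/
def IsCubeOfDim {V : Type} (G : SimpleGraph V) (c : Set V) (n : ℕ) : Prop :=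
  ∃ e : c ≃ (Fin n → Bool), ∀ x y : c, G.Adj x.1 y.1 ↔ ∃! i : Fin n, e x i ≠ e y i

/-- `c` is (the vertex set of) a cube of the complex. -/
def IsCube {V : Type} (G : SimpleGraph V) (c : Set V) : Prop :=
  ∃ n : ℕ, IsCubeOfDim G c n

/-- Vertices of the first cubical subdivision: the cubes (their barycenters). -/
def SubVert {V : Type} (G : SimpleGraph V) := {c : Set V // IsCube G c}

/-- The 1-skeleton of the first cubical subdivision: barycenters of cubes, two
being adjacent iff one cube is a codimension-one face of the other. -/
def subdivGraph {V : Type} (G : SimpleGraph V) : SimpleGraph (SubVert G) where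
  Adj a b := a.1 ≠ b.1 ∧ ∃ n : ℕ,
    (IsCubeOfDim G a.1 n ∧ IsCubeOfDim G b.1 (n + 1) ∧ a.1 ⊆ b.1) ∨
    (IsCubeOfDim G b.1 n ∧ IsCubeOfDim G a.1 (n + 1) ∧ b.1 ⊆ a.1)
  symm := by
    refine ⟨?_⟩
    rintro a b ⟨hne, n, h | h⟩
    · exact ⟨fun h' => hne h'.symm, n, Or.inr h⟩
    · exact ⟨fun h' => hne h'.symm, n, Or.inl h⟩
  loopless := by refine ⟨?_⟩; rintro a ⟨hne, _⟩; exact hne rfl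

/-- A subset of vertices is connected in the induced subgraph. -/
def InducedConnected {V : Type} (G : SimpleGraph V) (S : Set V) : Prop :=
  ∀ x ∈ S, ∀ y ∈ S, Relation.ReflTransGen (fun a b => a ∈ S ∧ b ∈ S ∧ G.Adj a b) x y


section MedAux
variable {V : Type} {G : SimpleGraph V}

/-- Across an edge, distances from any vertex differ. -/
lemma med_dist_ne (hG : IsMedianGraph G) {x y : V} (hxy : G.Adj x y) (v : V) :
    G.dist v x ≠ G.dist v y := by
  intro heq
  obtain ⟨m, hm, huniq⟩ := hG.2 x y v
  have h1 : G.dist x y = 1 := dist_eq_one_iff_adj.mpr hxy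
  obtain ⟨ha, hb, hc⟩ := hm
  rw [h1] at ha
  rcases Nat.le_one_iff_eq_zero_or_eq_one.mp (le_of_add_le_left ha.le) with h0 | h1'
  · -- dist x m = 0 so m = x
    have hx : m = x := (hG.1.dist_eq_zero_iff.mp h0).symm
    subst hx
    have c1 : G.dist y m = G.dist m y := SimpleGraph.dist_comm
    have c2 : G.dist m v = G.dist v m := SimpleGraph.dist_comm
    have c3 : G.dist y v = G.dist v y := SimpleGraph.dist_comm
    omega
  · have hy : m = y := by
      have : G.dist m y = 0 := by omega
      exact (hG.1.dist_eq_zero_iff.mp (by rwa [SimpleGraph.dist_comm])).symm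
    subst hy
    have c1 : G.dist m v = G.dist v m := SimpleGraph.dist_comm
    have c2 : G.dist x v = G.dist v x := SimpleGraph.dist_comm
    omega

lemma med_dist_cases (hG : IsMedianGraph G) {x y : V} (hxy : G.Adj x y) (v : V) :
    G.dist v x = G.dist v y + 1 ∨ G.dist v y = G.dist v x + 1 := by
  have h1 := hG.1.dist_triangle (u := v) (v := x) (w := y)
  have h2 := hG.1.dist_triangle (u := v) (v := y) (w := x)
  have h3 : G.dist x y = 1 := dist_eq_one_iff_adj.mpr hxy
  have h4 : G.dist y x = 1 := dist_eq_one_iff_adj.mpr hxy.symm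
  have h5 := med_dist_ne hG hxy v
  omega

lemma med_no_tri (hG : IsMedianGraph G) {a b c : V} (hab : G.Adj a b) (hbc : G.Adj b c) :
    ¬ G.Adj a c := fun hac =>
  med_dist_ne hG hbc a (by
    rw [dist_eq_one_iff_adj.mpr hab, dist_eq_one_iff_adj.mpr hac])

lemma med_dist_two (hG : IsMedianGraph G) {a b c : V} (hab : G.Adj a b) (hbc : G.Adj b c)
    (hac : a ≠ c) : G.dist a c = 2 := by
  have h1 := hG.1.dist_triangle (u := a) (v := b) (w := c)
  have h2 : G.dist a b = 1 := dist_eq_one_iff_adj.mpr hab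
  have h3 : G.dist b c = 1 := dist_eq_one_iff_adj.mpr hbc
  have h4 : G.dist a c ≠ 1 := fun h => med_no_tri hG hab hbc (dist_eq_one_iff_adj.mp h)
  have h5 : G.dist a c ≠ 0 := fun h => hac (hG.1.dist_eq_zero_iff.mp h)
  omega

/-- Key square lemma: opposite edges of a square induce the same distance partition. -/
lemma med_square (hG : IsMedianGraph G) {e1 e2 f1 f2 : V}
    (he : G.Adj e1 e2) (hf : G.Adj f1 f2) (h1 : G.Adj e1 f1) (h2 : G.Adj e2 f2)
    (hef : e1 ≠ f2) (hfe : e2 ≠ f1) (v : V)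
    (hv : G.dist v e1 < G.dist v e2) : G.dist v f1 < G.dist v f2 := by
  by_contra hcon
  push_neg at hcon
  have hne := med_dist_ne hG hf v
  have hlt : G.dist v f2 < G.dist v f1 := lt_of_le_of_ne hcon (fun h => hne h.symm)
  have c1 := med_dist_cases hG he v
  have c2 := med_dist_cases hG hf v
  have c3 := med_dist_cases hG h1 v
  have c4 := med_dist_cases hG h2 v
  set a := G.dist v e1 with ha
  have he2 : G.dist v e2 = a + 1 := by omega
  have hf1 : G.dist v f1 = a + 1 := by omega
  have hf2 : G.dist v f2 = a := by omega
  -- both e1 and f2 are medians of (v, e2, f1)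
  have hd : G.dist e2 f1 = 2 := med_dist_two hG he.symm h1 hfe
  obtain ⟨m, _, huniq⟩ := hG.2 v e2 f1
  have hm1 : (G.dist v e1 + G.dist e1 e2 = G.dist v e2 ∧
      G.dist e2 e1 + G.dist e1 f1 = G.dist e2 f1 ∧
      G.dist v e1 + G.dist e1 f1 = G.dist v f1) := by
    rw [dist_eq_one_iff_adj.mpr he, dist_eq_one_iff_adj.mpr he.symm,
      dist_eq_one_iff_adj.mpr h1, he2, hf1, hd]
    omega
  have hm2 : (G.dist v f2 + G.dist f2 e2 = G.dist v e2 ∧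
      G.dist e2 f2 + G.dist f2 f1 = G.dist e2 f1 ∧
      G.dist v f2 + G.dist f2 f1 = G.dist v f1) := by
    rw [dist_eq_one_iff_adj.mpr h2.symm, dist_eq_one_iff_adj.mpr h2,
      dist_eq_one_iff_adj.mpr hf.symm, he2, hf1, hf2, hd]
    omega
  exact hef ((huniq e1 hm1).trans (huniq f2 hm2).symm)

end MedAux

section
variable {V : Type} {G : SimpleGraph V}

/-- The side of an oriented edge: vertices closer to the first endpoint. -/
def Wside (G : SimpleGraph V) (e : V × V) : Set V := {v | G.dist v e.1 < G.dist v e.2}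

lemma elemPar_symm {e f : V × V} (h : ElemPar G e f) : ElemPar G f e :=
  ⟨h.2.1, h.1, h.2.2.1.symm, h.2.2.2.1.symm, fun hh => h.2.2.2.2.2 hh.symm,
    fun hh => h.2.2.2.2.1 hh.symm⟩

lemma elemPar_W (hG : IsMedianGraph G) {e f : V × V} (h : ElemPar G e f) :
    Wside G e = Wside G f := by
  obtain ⟨h1, h2, h3, h4, h5, h6⟩ := h
  ext v
  constructor
  · exact fun hv => med_square hG h1 h2 h3 h4 h5 h6 v hv
  · exact fun hv => med_square hG h2 h1 h3.symm h4.symm (fun hh => h6 hh.symm)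
      (fun hh => h5 hh.symm) v hv

lemma rev_W (hG : IsMedianGraph G) {e : V × V} (he : G.Adj e.1 e.2) :
    Wside G (e.2, e.1) = (Wside G e)ᶜ := by
  ext v
  have := med_dist_ne hG he v
  simp only [Wside, Set.mem_setOf_eq, Set.mem_compl_iff, not_lt]
  omega

lemma par_adj {e f : V × V} (h : Par G e f) : G.Adj e.1 e.2 ↔ G.Adj f.1 f.2 := by
  induction h with
  | rel a b hab =>
    rcases hab with h | h
    · exact ⟨fun _ => h.2.1, fun _ => h.1⟩
    · subst h; exact ⟨fun hh => hh.symm, fun hh => hh.symm⟩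
  | refl a => exact Iff.rfl
  | symm a b _ ih => exact ih.symm
  | trans a b c _ _ ih1 ih2 => exact ih1.trans ih2

lemma par_W (hG : IsMedianGraph G) {e f : V × V} (h : Par G e f) (he : G.Adj e.1 e.2) :
    Wside G f = Wside G e ∨ Wside G f = (Wside G e)ᶜ := by
  induction h with
  | rel a b hab =>
    rcases hab with h | h
    · exact Or.inl (elemPar_W hG h).symm
    · subst h; exact Or.inr (rev_W hG he)
  | refl a => exact Or.inl rfl
  | symm a b hab ih =>
    rcases ih ((par_adj (Relation.EqvGen.symm _ _ hab)).mp he) with h | h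
    · exact Or.inl h.symm
    · right; rw [h, compl_compl]
  | trans a b c hab hbc ih1 ih2 =>
    have hb := (par_adj hab).mp he
    rcases ih2 hb with h2 | h2 <;> rcases ih1 he with h1 | h1
    · exact Or.inl (h2.trans h1)
    · exact Or.inr (h2.trans h1)
    · right; rw [h2, h1]
    · left; rw [h2, h1, compl_compl]

/-- Two consecutive edges of a path with non-adjacent, distinct endpoints
cannot be parallel in a median graph. -/
lemma med_not_consec (hG : IsMedianGraph G) {a b c : V} (hab : G.Adj a b)
    (hbc : G.Adj b c) (hac : a ≠ c) (hpar : Par G (a, b) (b, c)) : False := by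
  have hd2 : G.dist a c = 2 := med_dist_two hG hab hbc hac
  have hda : G.dist a a = 0 := by
    simp [SimpleGraph.dist_self]
  have hdb : G.dist b b = 0 := by simp [SimpleGraph.dist_self]
  have hdab : G.dist a b = 1 := dist_eq_one_iff_adj.mpr hab
  have hdba : G.dist b a = 1 := dist_eq_one_iff_adj.mpr hab.symm
  have hdbc : G.dist b c = 1 := dist_eq_one_iff_adj.mpr hbc
  rcases par_W hG hpar hab with h | h
  · -- b ∈ Wside (b,c) but b ∉ Wside (a,b)
    have h1 : b ∈ Wside G (b, c) := by simp [Wside, hdb, hdbc]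
    have h2 : b ∉ Wside G (a, b) := by simp [Wside, hdba, hdb]
    rw [h] at h1; exact h2 h1
  · -- a ∈ Wside (a,b), so a ∉ Wside (b,c), but dist a b < dist a c
    have h1 : a ∈ Wside G (a, b) := by simp [Wside, hda, hdab]
    have h2 : a ∈ Wside G (b, c) := by simp [Wside, hdab, hd2]
    rw [h] at h2; exact h2 h1

end

section
variable {V V' : Type} {G : SimpleGraph V} {H : SimpleGraph V'} {f : V → V'}

lemma hyp_adj {h : Set (V' × V')} (hh : IsHyperplane H h) {g : V' × V'} (hg : g ∈ h) :
    H.Adj g.1 g.2 := by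
  obtain ⟨e₀, -, rfl⟩ := hh
  exact hg.1

lemma hyp_swap {h : Set (V' × V')} (hh : IsHyperplane H h) {a b : V'} (hg : (a, b) ∈ h) :
    (b, a) ∈ h := by
  obtain ⟨e₀, -, rfl⟩ := hh
  exact ⟨hg.1.symm, Relation.EqvGen.trans _ _ _ hg.2 (Relation.EqvGen.rel _ _ (Or.inr rfl))⟩

lemma hyp_elemPar {h : Set (V' × V')} (hh : IsHyperplane H h) {g g' : V' × V'}
    (hg : g ∈ h) (hp : ElemPar H g g') : g' ∈ h := by
  obtain ⟨e₀, -, rfl⟩ := hh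
  exact ⟨hp.2.1, Relation.EqvGen.trans _ _ _ hg.2 (Relation.EqvGen.rel _ _ (Or.inl hp))⟩

/-- One elementary-parallelism step preserves membership in the preimage. -/
lemma elem_mem (hH : IsMedianGraph H) (hcub : IsCubicalMap G H f)
    {h : Set (V' × V')} (hh : IsHyperplane H h) {e e' : V × V}
    (hp : ElemPar G e e') (he : e ∈ hypPreimage G f h) : e' ∈ hypPreimage G f h := by
  obtain ⟨he1, hfe⟩ := he
  obtain ⟨h1, h2, h3, h4, h5, h6⟩ := hp
  have hne : f e.1 ≠ f e.2 := (hyp_adj hh hfe).ne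
  have hsq : IsSquare4 G e.1 e.2 e'.2 e'.1 := ⟨h1, h4, h2.symm, h3.symm, h5, h6⟩
  rcases hcub.2 _ _ _ _ hsq with ⟨c, -⟩ | ⟨c, -⟩ | ⟨c1, c2, -⟩ | ⟨c1, c2, c3, c4, c5, c6⟩
  · exact absurd c hne
  · exact absurd c hne
  · refine ⟨h2, ?_⟩
    rw [c2, ← c1]; exact hfe
  · refine ⟨h2, hyp_elemPar hh hfe ?_⟩
    have a1 : H.Adj (f e'.1) (f e'.2) := (hcub.1 _ _ h2).resolve_left (fun hh => c5 hh.symm)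
    have a2 : H.Adj (f e.1) (f e'.1) := (hcub.1 _ _ h3).resolve_left (fun hh => c6 hh.symm)
    have a3 : H.Adj (f e.2) (f e'.2) := (hcub.1 _ _ h4).resolve_left c4
    exact ⟨hyp_adj hh hfe, a1, a2, a3, c1, c2⟩

lemma step_mem (hH : IsMedianGraph H) (hcub : IsCubicalMap G H f)
    {h : Set (V' × V')} (hh : IsHyperplane H h) {e e' : V × V}
    (hr : ElemPar G e e' ∨ e' = (e.2, e.1)) :
    e ∈ hypPreimage G f h ↔ e' ∈ hypPreimage G f h := by
  rcases hr with hp | hp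
  · exact ⟨elem_mem hH hcub hh hp, elem_mem hH hcub hh (elemPar_symm hp)⟩
  · subst hp
    exact ⟨fun ⟨ha, hb⟩ => ⟨ha.symm, hyp_swap hh hb⟩,
      fun ⟨ha, hb⟩ => ⟨ha.symm, hyp_swap hh hb⟩⟩

lemma par_mem (hH : IsMedianGraph H) (hcub : IsCubicalMap G H f)
    {h : Set (V' × V')} (hh : IsHyperplane H h) {e e' : V × V} (hp : Par G e e') :
    e ∈ hypPreimage G f h ↔ e' ∈ hypPreimage G f h := by
  induction hp with
  | rel a b hab => exact step_mem hH hcub hh hab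
  | refl a => exact Iff.rfl
  | symm a b _ ih => exact ih.symm
  | trans a b c _ _ ih1 ih2 => exact ih1.trans ih2

end


/-- if `f : Y → Z` is a cubical map between CAT(0) cube complexes,
then the inverse image of any hyperplane of `Z` is a disjoint union of hyperplanes
of `Y` (pairwise disjoint as edge sets, and pairwise non-crossing, i.e. disjoint
as subspaces). -/
theorem stmt4 {V V' : Type} (G : SimpleGraph V) (H : SimpleGraph V')
    (hG : IsMedianGraph G) (hH : IsMedianGraph H)
    (f : V → V') (hcub : IsCubicalMap G H f) :
    ∀ h : Set (V' × V'), IsHyperplane H h →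
      ∃ Hs : Set (Set (V × V)),
        (∀ h' ∈ Hs, IsHyperplane G h') ∧
        hypPreimage G f h = ⋃₀ Hs ∧
        Hs.Pairwise (fun a b => Disjoint a b ∧ ¬ CrossHyp G a b) := by
  intro h hh
  classical
  set pre := hypPreimage G f h with hpre
  refine ⟨{S | ∃ e ∈ pre, S = {g | G.Adj g.1 g.2 ∧ Par G e g}}, ?_, ?_, ?_⟩
  · rintro S ⟨e, he, rfl⟩
    exact ⟨e, he.1, rfl⟩
  · ext g
    constructor
    · intro hg
      exact ⟨{g' | G.Adj g'.1 g'.2 ∧ Par G g g'}, ⟨g, hg, rfl⟩,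
        ⟨hg.1, Relation.EqvGen.refl g⟩⟩
    · rintro ⟨S, ⟨e, he, rfl⟩, hg1, hg2⟩
      exact (par_mem hH hcub hh hg2).mp he
  · rintro S ⟨e₁, he₁, rfl⟩ T ⟨e₂, he₂, rfl⟩ hST
    constructor
    · rw [Set.disjoint_left]
      rintro g ⟨hg1, hg2⟩ ⟨hg3, hg4⟩
      apply hST
      have h12 : Par G e₁ e₂ :=
        Relation.EqvGen.trans _ _ _ hg2 (Relation.EqvGen.symm _ _ hg4)
      ext x
      exact ⟨fun ⟨hx1, hx2⟩ => ⟨hx1,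
          Relation.EqvGen.trans _ _ _ (Relation.EqvGen.symm _ _ h12) hx2⟩,
        fun ⟨hx1, hx2⟩ => ⟨hx1, Relation.EqvGen.trans _ _ _ h12 hx2⟩⟩
    · rintro ⟨x, y, z, w, hsq, hxy, hyz⟩
      have hxy' : (x, y) ∈ pre := (par_mem hH hcub hh hxy.2).mp he₁
      have hyz' : (y, z) ∈ pre := (par_mem hH hcub hh hyz.2).mp he₂
      have ha1 : H.Adj (f x) (f y) := hyp_adj hh hxy'.2
      have ha2 : H.Adj (f y) (f z) := hyp_adj hh hyz'.2
      have hfxz : f x ≠ f z := by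
        rcases hcub.2 _ _ _ _ hsq with ⟨c, -⟩ | ⟨c, -⟩ | ⟨c, -⟩ | ⟨c, -⟩
        · exact absurd c ha1.ne
        · exact absurd c ha1.ne
        · exact absurd c ha2.ne
        · exact c
      obtain ⟨e₀, -, rfl⟩ := hh
      exact med_not_consec hH ha1 ha2 hfxz
        (Relation.EqvGen.trans _ _ _ (Relation.EqvGen.symm _ _ hxy'.2.2) hyz'.2.2)
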